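/- arXiv:2010.03884 — 2 statements merged into one kernel-verified Lean document; each statement's English description precedes it below -/
import Mathlib

section
/- Let u be a bidirectional balanced infinite word over a finite alphabet A with letter frequencies ρ_a, and let positive lengths ℓ_a be chosen arbitrarily for a ∈ A. Then the geometric representation Λ_u = {x_n : n ∈ ℤ}, where x_n = Σ_a ℓ_a·(signed count of letter a in u between positions 0 and n), is bounded distance equivalent to the lattice ηℤ with η = Σ_{a∈A} ℓ_a ρ_a. -/
/-- `w` is a factor of the bidirectional infinite word `u : ℤ → A`. -/
def IsFactor {A : Type*} (u : ℤ → A) (w : List A) : Prop :=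
  ∃ i : ℤ, w = (List.range w.length).map (fun k => u (i + k))

/-- The signed number of occurrences of the letter `a` in `u` between positions
`0` and `n`: the count in `u_0 ⋯ u_{n-1}` for `n ≥ 0`, minus the count in
`u_n ⋯ u_{-1}` for `n < 0` (the `a`-entry of the signed Parikh vector `P[n]`). -/
def sCount {A : Type*} [DecidableEq A] (u : ℤ → A) (a : A) (n : ℤ) : ℤ :=
  if 0 ≤ n then (((List.range n.toNat).map (fun k => u k)).count a : ℤ)
  else -((((List.range (-n).toNat).map (fun k => u (n + k))).count a : ℤ))

/-- `Λ` is bounded distance equivalent to `L`. -/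
def BDEquiv (Λ L : Set ℝ) : Prop :=
  ∃ C > 0, ∃ g : Λ → L, Function.Bijective g ∧ ∀ x : Λ, |(x : ℝ) - (g x : ℝ)| < C

/-- The one-dimensional lattice `ηℤ`. -/
def lat (η : ℝ) : Set ℝ := {x : ℝ | ∃ n : ℤ, x = η * n}

namespace BDLaux

lemma range_cast (n : ℕ) :
    (do let a ← List.range n; pure ((a:ℤ))) = List.map (fun a : ℕ => (a:ℤ)) (List.range n) :=
  List.map_eq_flatMap.symm

variable {A : Type*} [DecidableEq A] (u : ℤ → A)

def fac (i : ℤ) (L : ℕ) : List A := List.map (fun k : ℕ => u (i + (k:ℤ))) (List.range L)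

lemma fac_length (i : ℤ) (L : ℕ) : (fac u i L).length = L := by
  rw [fac, List.length_map, List.length_range]

lemma isFactor_iff (w : List A) :
    IsFactor u w ↔ ∃ i : ℤ, w = fac u i w.length := by
  unfold IsFactor fac
  rw [range_cast]
  simp only [List.map_map]
  exact Iff.rfl

lemma fac_isFactor (i : ℤ) (L : ℕ) : IsFactor u (fac u i L) := by
  rw [isFactor_iff]
  exact ⟨i, by rw [fac_length]⟩

lemma fac_add (i : ℤ) (L L' : ℕ) :
    fac u i (L + L') = fac u i L ++ fac u (i + L) L' := by
  unfold fac
  rw [List.range_add, List.map_append, List.map_map]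
  congr 1
  apply List.map_congr_left
  intro k _
  simp only [Function.comp_apply]
  congr 1
  push_cast
  ring

lemma fac_one (i : ℤ) : fac u i 1 = [u i] := by
  simp [fac, List.range_succ]

lemma sCount_nonneg_eq {n : ℤ} (hn : 0 ≤ n) (a : A) :
    sCount u a n = ((fac u 0 n.toNat).count a : ℤ) := by
  rw [sCount, if_pos hn]
  unfold fac
  rw [range_cast, List.map_map]
  simp [Function.comp_def]

lemma sCount_nonpos_eq {n : ℤ} (hn : n ≤ 0) (a : A) :
    sCount u a n = -((fac u n (-n).toNat).count a : ℤ) := by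
  rcases eq_or_lt_of_le hn with h | h
  · subst h; simp [sCount, fac]
  · rw [sCount, if_neg (by omega)]
    unfold fac
    rw [range_cast, List.map_map]
    rfl

lemma sCount_succ (a : A) (n : ℤ) :
    sCount u a (n + 1) = sCount u a n + (if u n = a then 1 else 0) := by
  rcases le_or_gt 0 n with hn | hn
  · rw [sCount_nonneg_eq u hn, sCount_nonneg_eq u (by omega)]
    have h1 : (n + 1).toNat = n.toNat + 1 := by omega
    rw [h1, fac_add, List.count_append]
    rw [show (0 : ℤ) + (n.toNat : ℤ) = n by omega, fac_one]
    rcases eq_or_ne (u n) a with h | h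
    · subst h
      rw [if_pos rfl, show List.count (u n) [u n] = 1 by simp]
      push_cast; ring
    · have h0 : List.count a [u n] = 0 := List.count_eq_zero.mpr (by simp [Ne.symm h])
      rw [if_neg h, h0]
      push_cast; ring
  · rw [sCount_nonpos_eq u (by omega : n ≤ 0), sCount_nonpos_eq u (by omega : n + 1 ≤ 0)]
    have h1 : (-n).toNat = 1 + (-(n+1)).toNat := by omega
    rw [h1, fac_add, List.count_append, fac_one]
    rw [show n + ((1:ℕ) : ℤ) = n + 1 by push_cast; ring]
    rcases eq_or_ne (u n) a with h | h
    · subst h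
      rw [if_pos rfl, show List.count (u n) [u n] = 1 by simp]
      push_cast; ring
    · have h0 : List.count a [u n] = 0 := List.count_eq_zero.mpr (by simp [Ne.symm h])
      rw [if_neg h, h0]
      push_cast; ring

lemma count_blocks (c : ℝ)
    (hb : ∀ w v : List A, IsFactor u w → IsFactor u v →
      w.length = v.length → ∀ a : A, |(w.count a : ℝ) - (v.count a : ℝ)| ≤ c)
    (a : A) (i₀ : ℤ) (L : ℕ) :
    ∀ k : ℕ, ∀ j : ℤ,
      |((fac u j (k * L)).count a : ℝ) - k * ((fac u i₀ L).count a : ℝ)| ≤ k * c := by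
  intro k
  induction k with
  | zero => intro j; simp [fac]
  | succ k ih =>
    intro j
    have h1 : (k + 1) * L = k * L + L := by ring
    rw [h1, fac_add, List.count_append]
    have h2 := ih j
    have h3 := hb (fac u (j + (k*L : ℕ)) L) (fac u i₀ L) (fac_isFactor u _ _)
      (fac_isFactor u _ _) (by rw [fac_length, fac_length]) a
    push_cast
    push_cast at h2 h3
    calc |(((fac u j (k*L)).count a : ℝ) + ((fac u (j + (k*L:ℕ)) L).count a : ℝ))
          - ((k:ℝ)+1) * ((fac u i₀ L).count a : ℝ)|
        = |((((fac u j (k*L)).count a : ℝ)) - k * ((fac u i₀ L).count a))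
          + (((fac u (j + (k*L:ℕ)) L).count a : ℝ) - ((fac u i₀ L).count a))| := by
          congr 1; push_cast; ring
      _ ≤ _ + _ := abs_add_le _ _
      _ ≤ k * c + c := add_le_add h2 h3
      _ = ((k:ℝ)+1) * c := by ring

lemma count_close_to_freq (c : ℝ) (hc : 0 < c)
    (hb : ∀ w v : List A, IsFactor u w → IsFactor u v →
      w.length = v.length → ∀ a : A, |(w.count a : ℝ) - (v.count a : ℝ)| ≤ c)
    (ρ : A → ℝ)
    (hfreq : ∀ a : A, ∀ ε : ℝ, 0 < ε → ∃ N : ℕ, ∀ w : List A, IsFactor u w →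
      N ≤ w.length → |(w.count a : ℝ) / (w.length : ℝ) - ρ a| < ε)
    (i : ℤ) (L : ℕ) (a : A) :
    |((fac u i L).count a : ℝ) - ρ a * L| ≤ c := by
  rcases Nat.eq_zero_or_pos L with hL | hL
  · subst hL; simp [fac]; exact hc.le
  apply le_of_forall_pos_le_add
  intro ε hε
  have hLpos : (0:ℝ) < L := by exact_mod_cast hL
  have hε' : 0 < ε / L := div_pos hε hLpos
  obtain ⟨N, hN⟩ := hfreq a (ε / L) hε'
  set k := N + 1 with hk
  have hkpos : (0:ℝ) < k := by positivity
  have hkL : N ≤ (fac u 0 (k * L)).length := by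
    rw [fac_length]
    calc N ≤ k := by omega
    _ = k * 1 := (mul_one k).symm
    _ ≤ k * L := Nat.mul_le_mul_left k hL
  have hW := hN (fac u 0 (k * L)) (fac_isFactor u _ _) hkL
  rw [fac_length] at hW
  have hkLpos : (0:ℝ) < (k * L : ℕ) := by positivity
  have hW2 : |((fac u 0 (k*L)).count a : ℝ) - ρ a * (k * L : ℕ)| < ε / L * (k * L : ℕ) := by
    rw [div_sub' (ne_of_gt hkLpos), abs_div, abs_of_pos hkLpos,
      div_lt_iff₀ hkLpos] at hW
    rw [mul_comm (ρ a)]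
    exact hW
  have hblocks := count_blocks u c hb a i L k 0
  have key : (k : ℝ) * |((fac u i L).count a : ℝ) - ρ a * L| ≤ k * (c + ε) := by
    rw [show (k:ℝ) * |((fac u i L).count a : ℝ) - ρ a * L|
        = |(k:ℝ) * (((fac u i L).count a : ℝ) - ρ a * L)| by
      rw [abs_mul, abs_of_pos hkpos]]
    calc |(k:ℝ) * (((fac u i L).count a : ℝ) - ρ a * L)|
        = |-(((fac u 0 (k*L)).count a : ℝ) - k * ((fac u i L).count a : ℝ))
          + (((fac u 0 (k*L)).count a : ℝ) - ρ a * (k * L : ℕ))| := by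
          congr 1; push_cast; ring
      _ ≤ _ + _ := abs_add_le _ _
      _ ≤ k * c + ε / L * (k * L : ℕ) := by
          rw [abs_neg]; exact add_le_add hblocks hW2.le
      _ = k * (c + ε) := by
          push_cast
          field_simp
  exact (mul_le_mul_iff_right₀ hkpos).mp key

end BDLaux

/-- any geometric representation (with arbitrary positive lengths
`ℓ_a`) of a balanced bidirectional infinite word is bounded distance equivalent to
the lattice `ηℤ`, where `η = Σ_a ℓ_a ρ_a` and `ρ_a` are the letter frequencies. -/
theorem geometric_representation_of_balanced_is_bdl {A : Type*} [Fintype A]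
    [DecidableEq A] (u : ℤ → A)
    (hbal : ∃ c : ℝ, 0 < c ∧ ∀ w v : List A, IsFactor u w → IsFactor u v →
      w.length = v.length → ∀ a : A, |(w.count a : ℝ) - (v.count a : ℝ)| ≤ c)
    (ρ : A → ℝ)
    (hfreq : ∀ a : A, ∀ ε : ℝ, 0 < ε → ∃ N : ℕ, ∀ w : List A, IsFactor u w →
      N ≤ w.length → |(w.count a : ℝ) / (w.length : ℝ) - ρ a| < ε)
    (ℓ : A → ℝ) (hℓ : ∀ a, 0 < ℓ a) :
    BDEquiv {x : ℝ | ∃ n : ℤ, x = ∑ a : A, ℓ a * (sCount u a n : ℝ)}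
      (lat (∑ a : A, ℓ a * ρ a)) := by
  classical
  obtain ⟨c, hc, hb⟩ := hbal
  have hA : Nonempty A := ⟨u 0⟩
  set η : ℝ := ∑ a : A, ℓ a * ρ a with hηdef
  set X : ℤ → ℝ := fun n => ∑ a : A, ℓ a * (sCount u a n : ℝ) with hX
  set C : ℝ := (∑ a : A, ℓ a) * c with hC
  have hsum : 0 < ∑ a : A, ℓ a := Finset.sum_pos (fun a _ => hℓ a) Finset.univ_nonempty
  have hCpos : 0 < C := mul_pos hsum hc
  -- step relation
  have hXsucc : ∀ n : ℤ, X (n + 1) = X n + ℓ (u n) := by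
    intro n
    simp only [hX]
    have : ∀ a : A, ((sCount u a (n+1) : ℤ) : ℝ)
        = ((sCount u a n : ℤ) : ℝ) + (if u n = a then (1:ℝ) else 0) := by
      intro a
      rw [BDLaux.sCount_succ u a n]
      push_cast
      split_ifs <;> simp
    simp only [this, mul_add, Finset.sum_add_distrib, mul_ite, mul_one, mul_zero,
      Finset.sum_ite_eq, Finset.mem_univ, if_true]
  have hmono : StrictMono X := strictMono_int_of_lt_succ (fun n => by
    rw [hXsucc n]; linarith [hℓ (u n)])
  -- the central bound
  have hbound : ∀ n : ℤ, |X n - η * n| ≤ C := by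
    intro n
    have key : ∀ (i : ℤ) (L : ℕ) (a : A),
        |((BDLaux.fac u i L).count a : ℝ) - ρ a * L| ≤ c :=
      fun i L a => BDLaux.count_close_to_freq u c hc hb ρ hfreq i L a
    rcases le_or_gt 0 n with hn | hn
    · have hn' : ((n.toNat : ℕ) : ℝ) = (n : ℝ) := by exact_mod_cast Int.toNat_of_nonneg hn
      have heq : X n - η * n
          = ∑ a : A, ℓ a * (((BDLaux.fac u 0 n.toNat).count a : ℝ) - ρ a * n.toNat) := by
        simp only [hX, hηdef, Finset.sum_mul, mul_sub, ← Finset.sum_sub_distrib]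
        congr 1
        funext a
        rw [BDLaux.sCount_nonneg_eq u hn a, hn']
        push_cast
        ring
      rw [heq]
      calc |∑ a : A, ℓ a * (((BDLaux.fac u 0 n.toNat).count a : ℝ) - ρ a * n.toNat)|
          ≤ ∑ a : A, |ℓ a * (((BDLaux.fac u 0 n.toNat).count a : ℝ) - ρ a * n.toNat)| :=
            Finset.abs_sum_le_sum_abs _ _
        _ ≤ ∑ a : A, ℓ a * c := by
            apply Finset.sum_le_sum
            intro a _
            rw [abs_mul, abs_of_pos (hℓ a)]
            exact mul_le_mul_of_nonneg_left (key 0 n.toNat a) (hℓ a).le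
        _ = C := by rw [hC, Finset.sum_mul]
    · set m : ℕ := (-n).toNat with hm
      have hn' : ((m : ℕ) : ℝ) = -(n : ℝ) := by
        rw [hm]
        exact_mod_cast Int.toNat_of_nonneg (by omega : (0:ℤ) ≤ -n)
      have heq : X n - η * n
          = -(∑ a : A, ℓ a * (((BDLaux.fac u n m).count a : ℝ) - ρ a * m)) := by
        simp only [hX, hηdef, Finset.sum_mul, mul_sub, ← Finset.sum_sub_distrib,
          ← Finset.sum_neg_distrib]
        congr 1
        funext a
        rw [BDLaux.sCount_nonpos_eq u (by omega : n ≤ 0) a, hn']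
        push_cast
        ring
      rw [heq, abs_neg]
      calc |∑ a : A, ℓ a * (((BDLaux.fac u n m).count a : ℝ) - ρ a * m)|
          ≤ ∑ a : A, |ℓ a * (((BDLaux.fac u n m).count a : ℝ) - ρ a * m)| :=
            Finset.abs_sum_le_sum_abs _ _
        _ ≤ ∑ a : A, ℓ a * c := by
            apply Finset.sum_le_sum
            intro a _
            rw [abs_mul, abs_of_pos (hℓ a)]
            exact mul_le_mul_of_nonneg_left (key n m a) (hℓ a).le
        _ = C := by rw [hC, Finset.sum_mul]
  -- positivity of η
  set m₀ : ℝ := Finset.univ.inf' Finset.univ_nonempty ℓ with hm₀def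
  have hm₀ : 0 < m₀ := (Finset.lt_inf'_iff _).mpr (fun a _ => hℓ a)
  have hX0 : X 0 = 0 := by
    simp [hX, sCount]
  have hXlow : ∀ n : ℕ, (n : ℝ) * m₀ ≤ X n := by
    intro n
    induction n with
    | zero => simp [hX0]
    | succ n ih =>
      rw [show ((n+1 : ℕ) : ℤ) = (n:ℤ) + 1 by push_cast; ring, hXsucc n]
      have h3 : m₀ ≤ ℓ (u n) := Finset.inf'_le ℓ (Finset.mem_univ (u n))
      push_cast
      linarith
  have hη : 0 < η := by
    by_contra h
    push_neg at h
    obtain ⟨n, hn⟩ := exists_nat_gt (C / m₀)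
    have h1 : C / m₀ < n := hn
    have h2 : C < n * m₀ := by
      rw [div_lt_iff₀ hm₀] at h1; linarith
    have h3 := hbound n
    have h4 := hXlow n
    have h5 : η * ((n : ℤ) : ℝ) ≤ 0 := by
      push_cast
      exact mul_nonpos_of_nonpos_of_nonneg h (Nat.cast_nonneg n)
    have h6 : X n - η * ((n : ℤ) : ℝ) ≤ C := (abs_le.mp h3).2
    linarith
  have hηne : η ≠ 0 := ne_of_gt hη
  -- construct the bijection
  have mem : ∀ x : {x : ℝ | ∃ n : ℤ, x = ∑ a : A, ℓ a * (sCount u a n : ℝ)},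
      ∃ n : ℤ, (x : ℝ) = X n := fun x => x.2
  choose f hf using mem
  refine ⟨C + 1, by linarith, ?_⟩
  refine ⟨fun x => ⟨η * (f x : ℝ), ⟨f x, rfl⟩⟩, ⟨?_, ?_⟩, ?_⟩
  · intro x y hxy
    have h1 : η * ((f x : ℤ) : ℝ) = η * ((f y : ℤ) : ℝ) := congrArg Subtype.val hxy
    have h2 : ((f x : ℤ) : ℝ) = ((f y : ℤ) : ℝ) := mul_left_cancel₀ hηne h1
    have h3 : f x = f y := by exact_mod_cast h2
    apply Subtype.ext
    rw [hf x, hf y, h3]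
  · rintro ⟨y, m, hm⟩
    refine ⟨⟨X m, ⟨m, rfl⟩⟩, ?_⟩
    apply Subtype.ext
    have h1 : X m = X (f ⟨X m, ⟨m, rfl⟩⟩) := hf ⟨X m, ⟨m, rfl⟩⟩
    have h2 : f ⟨X m, ⟨m, rfl⟩⟩ = m := hmono.injective h1.symm
    simp only [h2]
    exact hm.symm
  · intro x
    calc |(x : ℝ) - η * ((f x : ℤ) : ℝ)|
        = |X (f x) - η * ((f x : ℤ) : ℝ)| := by rw [hf x]
      _ ≤ C := hbound _
      _ < C + 1 := lt_add_one C
end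

section
/- Let φ be a substitution over a finite alphabet A whose incidence matrix has at least one eigenvalue of modulus less than 1, and let u be a bidirectional fixed point of φ. Then there exists a non-trivial geometric representation of u (positive lengths ℓ_a, not all equal) which is bounded distance equivalent to a lattice. -/
/-- `φ` is a substitution: a non-erasing morphism (given by its values on letters)
with letters `a`, `b` such that `φ(a) = a·w` and `φ(b) = v·b` for nonempty `w`, `v`. -/
def IsSubstitution {A : Type*} (φ : A → List A) : Prop :=
  (∀ a : A, φ a ≠ []) ∧
  (∃ a : A, ∃ w : List A, w ≠ [] ∧ φ a = a :: w) ∧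
  (∃ b : A, ∃ v : List A, v ≠ [] ∧ φ b = v ++ [b])

/-- `u : ℤ → A` is a bidirectional fixed point of `φ`. -/
def IsBidirFixedPoint {A : Type*} (φ : A → List A) (u : ℤ → A) : Prop :=
  ∃ k : ℤ → ℤ, k 0 = 0 ∧
    (∀ n : ℤ, k (n + 1) = k n + (φ (u n)).length) ∧
    (∀ n : ℤ, (List.range (φ (u n)).length).map (fun j => u (k n + j)) = φ (u n))

section aux
variable {A : Type*} [DecidableEq A] (u : ℤ → A)

lemma sCount_def' (a : A) (n : ℤ) :
    sCount u a n =
      if 0 ≤ n then (((List.range n.toNat).map (fun k : ℕ => u (k:ℤ))).count a : ℤ)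
      else -((((List.range (-n).toNat).map (fun k : ℕ => u (n + (k:ℤ)))).count a : ℤ)) := by
  simp only [sCount, List.bind_eq_flatMap, List.pure_def, ← List.map_eq_flatMap, List.map_map]
  rfl

lemma sCount_zero (a : A) : sCount u a 0 = 0 := by simp [sCount_def']

lemma sCount_nonpos (a : A) {n : ℤ} (hn : n ≤ 0) :
    sCount u a n = -((((List.range (-n).toNat).map (fun k : ℕ => u (n + (k:ℤ)))).count a : ℤ)) := by
  rcases lt_or_eq_of_le hn with h | h
  · rw [sCount_def', if_neg (by omega)]
  · subst h; simp [sCount_def']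

lemma sCount_succ (a : A) (n : ℤ) :
    sCount u a (n + 1) = sCount u a n + (if u n = a then 1 else 0) := by
  rcases le_or_gt 0 n with hn | hn
  · rw [sCount_def', if_pos (by omega), sCount_def', if_pos hn]
    have h1 : (n + 1).toNat = n.toNat + 1 := by omega
    have h2 : ((n.toNat : ℤ)) = n := Int.toNat_of_nonneg hn
    rw [h1, List.range_succ, List.map_append, List.count_append]
    simp [List.count_singleton', h2]
  · have h1 : n + 1 ≤ 0 := by omega
    rw [sCount_nonpos u a h1, sCount_nonpos u a hn.le]
    have hm : (-n).toNat = (-(n+1)).toNat + 1 := by omega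
    rw [hm, List.range_succ_eq_map, List.map_cons, List.map_map]
    have hfun : ((fun k : ℕ => u (n + (k:ℤ))) ∘ Nat.succ) = fun k : ℕ => u ((n+1) + (k:ℤ)) := by
      funext k; simp only [Function.comp_apply]; congr 1; push_cast; ring
    rw [hfun]
    simp only [Nat.cast_zero, add_zero, List.count_cons]
    by_cases h : u n = a <;> simp [h] <;> push_cast <;> ring

lemma sCount_add_nat (a : A) (p : ℤ) : ∀ L : ℕ,
    sCount u a (p + L) =
      sCount u a p + (((List.range L).map (fun j : ℕ => u (p + (j:ℤ)))).count a : ℤ)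
  | 0 => by simp [List.range_zero]
  | (L+1) => by
    have h : (p + ((L:ℕ)+1:ℕ)) = (p + L) + 1 := by push_cast; ring
    rw [h, sCount_succ, sCount_add_nat a p L, List.range_succ, List.map_append,
      List.count_append]
    simp only [List.map_cons, List.map_nil, List.count_singleton']
    by_cases hc : u (p + (L:ℤ)) = a <;> simp [hc] <;> ring

lemma int_eq_of_step (F G : ℤ → ℤ) (h0 : F 0 = G 0)
    (hs : ∀ m : ℤ, F (m+1) - F m = G (m+1) - G m) : ∀ m, F m = G m := by
  intro m
  induction m using Int.induction_on with
  | zero => exact h0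
  | succ i ih => have := hs i; linarith
  | pred i ih =>
      have h := hs (-(i:ℤ) - 1)
      rw [show -(i:ℤ) - 1 + 1 = -(i:ℤ) by ring] at h
      linarith



lemma buildRep {A : Type*} [Fintype A] [DecidableEq A] (u : ℤ → A) (wr : A → ℝ) (a0 : A)
    (h0 : wr a0 ≠ 0) (B : ℝ)
    (hb : ∀ n : ℤ, |∑ a, wr a * ((sCount u a n : ℤ) : ℝ)| ≤ B) :
    ∃ ℓ : A → ℝ, (∀ a : A, 0 < ℓ a) ∧ (∃ a b : A, ℓ a ≠ ℓ b) ∧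
      ∃ η > 0, BDEquiv {x : ℝ | ∃ n : ℤ, x = ∑ a : A, ℓ a * (sCount u a n : ℝ)}
        (lat η) := by
  classical
  have hsum : ∀ n : ℤ, (∑ a, sCount u a n) = n := by
    refine int_eq_of_step _ (fun n => n) (by simp [sCount_zero]) (fun m => ?_)
    have : ∀ a, sCount u a (m+1) = sCount u a m + (if u m = a then 1 else 0) :=
      fun a => sCount_succ u a m
    simp only [this, Finset.sum_add_distrib]
    rw [Finset.sum_ite_eq]
    simp
  have hBnn : 0 ≤ B := le_trans (abs_nonneg _) (hb 0)
  -- wr is not constant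
  have hne : ∃ a b : A, wr a ≠ wr b := by
    by_contra h
    push_neg at h
    have hx : ∀ n : ℤ, (∑ a, wr a * ((sCount u a n : ℤ) : ℝ)) = wr a0 * (n : ℝ) := by
      intro n
      have h1 : (∑ a, wr a * ((sCount u a n : ℤ) : ℝ))
          = wr a0 * ∑ a, ((sCount u a n : ℤ) : ℝ) := by
        rw [Finset.mul_sum]
        exact Finset.sum_congr rfl fun a _ => by rw [h a a0]
      have h2 : (∑ a, ((sCount u a n : ℤ) : ℝ)) = ((∑ a, sCount u a n : ℤ) : ℝ) := by
        push_cast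
        rfl
      rw [h1, h2, hsum n]
    set n0 : ℤ := ⌈B / |wr a0|⌉ + 1 with hn0
    have h2 : (0:ℝ) < |wr a0| := abs_pos.2 h0
    have h3 : (0:ℤ) ≤ ⌈B / |wr a0|⌉ := Int.ceil_nonneg (div_nonneg hBnn h2.le)
    have h4 : B / |wr a0| < ((n0 : ℤ) : ℝ) := by
      have hcl := Int.le_ceil (B / |wr a0|)
      rw [hn0]
      push_cast
      linarith
    have h5 : B < |wr a0| * ((n0:ℤ) : ℝ) := by
      rw [div_lt_iff₀ h2] at h4; linarith
    have h6 := hb n0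
    rw [hx n0, abs_mul] at h6
    have h7 : |((n0:ℤ):ℝ)| = ((n0:ℤ):ℝ) := by
      rw [abs_of_pos]
      exact_mod_cast (by omega : (0:ℤ) < n0)
    rw [h7] at h6
    linarith
  -- the lengths
  set T : ℝ := 1 + ∑ a, |wr a| with hT
  have habs : ∀ a : A, |wr a| ≤ ∑ b, |wr b| :=
    fun a => Finset.single_le_sum (f := fun b => |wr b|) (fun b _ => abs_nonneg _)
      (Finset.mem_univ a)
  set ℓ : A → ℝ := fun a => T + wr a with hℓ
  have hlpos : ∀ a, 0 < ℓ a := by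
    intro a
    have := habs a
    have := neg_abs_le (wr a)
    simp only [hℓ, hT]
    linarith
  have hTpos : (0:ℝ) < T := by have := hlpos a0; have := habs a0; have := abs_nonneg (wr a0); simp only [hT]; positivity
  set X : ℤ → ℝ := fun n => ∑ a, ℓ a * ((sCount u a n : ℤ) : ℝ) with hX
  have hXval : ∀ n : ℤ, X n = T * (n : ℝ) + ∑ a, wr a * ((sCount u a n : ℤ) : ℝ) := by
    intro n
    simp only [hX, hℓ, add_mul, Finset.sum_add_distrib]
    congr 1
    rw [← Finset.mul_sum]
    congr 1
    have h2 : (∑ a, ((sCount u a n : ℤ) : ℝ)) = ((∑ a, sCount u a n : ℤ) : ℝ) := by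
      push_cast
      rfl
    rw [h2, hsum n]
  have hXd : ∀ n : ℤ, |X n - T * (n:ℝ)| ≤ B := by
    intro n; rw [hXval n]; simpa using hb n
  have hXstep : ∀ n : ℤ, X (n + 1) = X n + ℓ (u n) := by
    intro n
    simp only [hX]
    have : ∀ a, ℓ a * ((sCount u a (n+1) : ℤ) : ℝ)
        = ℓ a * ((sCount u a n : ℤ) : ℝ) + (if u n = a then ℓ a else 0) := by
      intro a
      rw [sCount_succ u a n]
      push_cast
      split_ifs <;> ring
    simp only [this, Finset.sum_add_distrib]
    rw [Finset.sum_ite_eq]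
    simp
  have hXmono : StrictMono X := by
    apply strictMono_int_of_lt_succ
    intro n
    rw [hXstep n]
    linarith [hlpos (u n)]
  refine ⟨ℓ, hlpos, hne.imp (fun a h => h.imp fun b hab => by
      simp only [hℓ]; intro hc; exact hab (by linarith)), T, hTpos, ?_⟩
  -- BD equivalence
  set Λ : Set ℝ := {x : ℝ | ∃ n : ℤ, x = ∑ a : A, ℓ a * (sCount u a n : ℝ)} with hΛ
  have meml : ∀ n : ℤ, X n ∈ Λ := fun n => ⟨n, rfl⟩
  set eΛ : ℤ → Λ := fun n => ⟨X n, meml n⟩ with heΛdef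
  have heΛ : Function.Bijective eΛ := by
    constructor
    · intro m n h
      exact hXmono.injective (congrArg Subtype.val h)
    · rintro ⟨x, n, hn⟩
      exact ⟨n, Subtype.ext hn.symm⟩
  set eL : ℤ → lat T := fun n => ⟨T * n, n, rfl⟩ with heLdef
  have heL : Function.Bijective eL := by
    constructor
    · intro m n h
      have : T * (m:ℝ) = T * (n:ℝ) := congrArg Subtype.val h
      exact_mod_cast mul_left_cancel₀ (ne_of_gt hTpos) this
    · rintro ⟨x, n, hn⟩
      exact ⟨n, Subtype.ext hn.symm⟩
  set E := Equiv.ofBijective eΛ heΛ with hE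
  refine ⟨B + 1, by linarith, fun x => eL (E.symm x), heL.comp E.symm.bijective, ?_⟩
  intro x
  have hx : X (E.symm x) = (x : ℝ) := by
    have := E.apply_symm_apply x
    exact congrArg Subtype.val this
  have : (eL (E.symm x) : ℝ) = T * ((E.symm x : ℤ) : ℝ) := rfl
  rw [this, ← hx]
  exact lt_of_le_of_lt (hXd (E.symm x)) (by linarith)

end aux

/-- if the incidence matrix of a substitution `φ` has an eigenvalue
of modulus `< 1`, then any bidirectional fixed point `u` of `φ` has a non-trivial
geometric representation (positive lengths, not all equal) which is bounded
distance equivalent to a lattice. -/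
theorem nontrivial_bdl_representation_of_fixed_point {A : Type*} [Fintype A]
    [DecidableEq A] (φ : A → List A) (hφ : IsSubstitution φ)
    (heig : ∃ μ : ℂ, ‖μ‖ < 1 ∧ ∃ v : A → ℂ, v ≠ 0 ∧
      (Matrix.of fun b a : A => ((φ a).count b : ℂ)).mulVec v = μ • v)
    (u : ℤ → A) (hu : IsBidirFixedPoint φ u) :
    ∃ ℓ : A → ℝ, (∀ a : A, 0 < ℓ a) ∧ (∃ a b : A, ℓ a ≠ ℓ b) ∧
      ∃ η > 0, BDEquiv {x : ℝ | ∃ n : ℤ, x = ∑ a : A, ℓ a * (sCount u a n : ℝ)}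
        (lat η) := by
  classical
  obtain ⟨μ, hμ, v, hv0, hMv⟩ := heig
  set M : Matrix A A ℂ := Matrix.of fun b a : A => ((φ a).count b : ℂ) with hM
  -- left eigenvector
  have hdet : (M - μ • 1).det = 0 := by
    rw [← Matrix.exists_mulVec_eq_zero_iff]
    refine ⟨v, hv0, ?_⟩
    rw [Matrix.sub_mulVec, Matrix.smul_mulVec, Matrix.one_mulVec, hMv, sub_self]
  obtain ⟨w, hw0, hwM⟩ := (Matrix.exists_vecMul_eq_zero_iff).2 hdet
  have hleft : ∀ b, (∑ a, w a * ((φ b).count a : ℂ)) = μ * w b := by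
    intro b
    have h1 : Matrix.vecMul w (M - μ • 1) b = 0 := congrFun hwM b
    simp only [Matrix.vecMul, dotProduct, Matrix.sub_apply, Matrix.smul_apply,
      Matrix.one_apply, hM, Matrix.of_apply, mul_ite, mul_one, mul_zero, smul_eq_mul,
      mul_sub, Finset.sum_sub_distrib, Finset.sum_ite_eq', Finset.mem_univ, if_true] at h1
    linear_combination h1
  obtain ⟨k, hk0, hkstep, hkblock⟩ := hu
  have lenpos : ∀ a, 0 < (φ a).length := fun a => List.length_pos_iff.2 (hφ.1 a)
  -- normalize the block property
  have hkblock' : ∀ n : ℤ,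
      (List.range (φ (u n)).length).map (fun j : ℕ => u (k n + (j:ℤ))) = φ (u n) := by
    intro n
    have h := hkblock n
    simpa only [List.bind_eq_flatMap, List.pure_def, ← List.map_eq_flatMap,
      List.map_map, Function.comp_def] using h
  -- the key structural identity
  have hkey : ∀ a : A, ∀ m : ℤ,
      sCount u a (k m) = ∑ b, ((φ b).count a : ℤ) * sCount u b m := by
    intro a
    refine int_eq_of_step _ _ ?_ ?_
    · rw [hk0, sCount_zero]
      simp [sCount_zero]
    · intro m
      have hL : sCount u a (k (m+1)) = sCount u a (k m) + ((φ (u m)).count a : ℤ) := by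
        rw [hkstep m]
        have := sCount_add_nat u a (k m) (φ (u m)).length
        rw [this, hkblock' m]
      have hR : (∑ b, ((φ b).count a : ℤ) * sCount u b (m+1))
          = (∑ b, ((φ b).count a : ℤ) * sCount u b m) + ((φ (u m)).count a : ℤ) := by
        have h1 : ∀ b : A, ((φ b).count a : ℤ) * sCount u b (m+1)
            = ((φ b).count a : ℤ) * sCount u b m
              + (if u m = b then ((φ b).count a : ℤ) else 0) := by
          intro b
          rw [sCount_succ u b m]
          split_ifs <;> ring
        rw [Finset.sum_congr rfl fun b _ => h1 b, Finset.sum_add_distrib,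
          Finset.sum_ite_eq]
        simp
      rw [hL, hR]
      ring
  -- the complex functional
  set f : ℤ → ℂ := fun n => ∑ a, w a * ((sCount u a n : ℤ) : ℂ) with hf
  have hf_k : ∀ m : ℤ, f (k m) = μ * f m := by
    intro m
    have h1 : f (k m) = ∑ a, ∑ b, w a * ((φ b).count a : ℂ) * ((sCount u b m : ℤ) : ℂ) := by
      simp only [hf]
      refine Finset.sum_congr rfl fun a _ => ?_
      rw [hkey a m]
      push_cast
      rw [Finset.mul_sum]
      exact Finset.sum_congr rfl fun b _ => by ring
    rw [h1, Finset.sum_comm]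
    have h2 : ∀ b : A, (∑ a, w a * ((φ b).count a : ℂ) * ((sCount u b m : ℤ) : ℂ))
        = μ * (w b * ((sCount u b m : ℤ) : ℂ)) := by
      intro b
      rw [← Finset.sum_mul, hleft b]
      ring
    rw [Finset.sum_congr rfl fun b _ => h2 b, ← Finset.mul_sum]
  set W : ℝ := ∑ a, ‖w a‖ with hW
  have hWnn : 0 ≤ W := Finset.sum_nonneg fun a _ => norm_nonneg _
  have hstep1 : ∀ n : ℤ, f (n+1) - f n = w (u n) := by
    intro n
    simp only [hf]
    rw [← Finset.sum_sub_distrib]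
    have h1 : ∀ a : A, w a * ((sCount u a (n+1) : ℤ) : ℂ) - w a * ((sCount u a n : ℤ) : ℂ)
        = if u n = a then w a else 0 := by
      intro a
      rw [sCount_succ u a n]
      push_cast
      split_ifs <;> ring
    rw [Finset.sum_congr rfl fun a _ => h1 a, Finset.sum_ite_eq]
    simp
  have hlip : ∀ p : ℤ, ∀ j : ℕ, ‖f (p + j) - f p‖ ≤ j * W := by
    intro p j
    induction j with
    | zero => simp
    | succ j ih =>
        have harg : (p + ((j:ℕ)+1:ℕ)) = (p + j) + 1 := by push_cast; ring
        rw [harg]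
        have h2 : f ((p+j)+1) - f p = (f ((p+j)+1) - f (p+j)) + (f (p+j) - f p) := by ring
        rw [h2]
        refine le_trans (norm_add_le _ _) ?_
        rw [hstep1]
        have hw1 : ‖w (u (p+j))‖ ≤ W :=
          Finset.single_le_sum (f := fun a => ‖w a‖) (fun a _ => norm_nonneg _)
            (Finset.mem_univ _)
        push_cast
        linarith
  -- location of n between k m and k (m+1)
  have hkmono : ∀ m : ℤ, k m + 1 ≤ k (m + 1) := by
    intro m; rw [hkstep m]; have := lenpos (u m); omega
  have hkup : ∀ N : ℕ, ∃ m : ℤ, 0 ≤ m ∧ m ≤ (N:ℤ) ∧ k m ≤ (N:ℤ) ∧ (N:ℤ) < k (m+1) := by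
    intro N
    induction N with
    | zero =>
        refine ⟨0, le_refl _, by simp, by rw [hk0]; simp, ?_⟩
        have := hkmono 0
        rw [hk0] at this
        omega
    | succ N ih =>
        obtain ⟨m, hm0, hmN, h1, h2⟩ := ih
        by_cases hc : ((N:ℤ)+1) < k (m+1)
        · exact ⟨m, hm0, by push_cast; omega, by push_cast; omega, by push_cast; omega⟩
        · refine ⟨m+1, by omega, by push_cast; omega, by push_cast; omega, ?_⟩
          have := hkmono (m+1)
          push_cast
          omega
  have hkdown : ∀ N : ℕ, ∃ m : ℤ, -(N:ℤ) ≤ m ∧ m ≤ 0 ∧ k m ≤ -(N:ℤ) ∧ -(N:ℤ) < k (m+1) := by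
    intro N
    induction N with
    | zero =>
        refine ⟨0, by simp, le_refl _, by rw [hk0]; simp, ?_⟩
        have := hkmono 0
        rw [hk0] at this
        omega
    | succ N ih =>
        obtain ⟨m, hm0, hmN, h1, h2⟩ := ih
        by_cases hc : k m ≤ -(N:ℤ)-1
        · exact ⟨m, by push_cast; omega, hmN, by push_cast; omega, by push_cast; omega⟩
        · refine ⟨m-1, by push_cast; omega, by omega, ?_, ?_⟩
          · have := hkmono (m-1)
            rw [show m - 1 + 1 = m by ring] at this
            push_cast
            omega
          · rw [show m - 1 + 1 = m by ring]
            push_cast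
            omega
  have hloc : ∀ n : ℤ, ∃ m : ℤ, k m ≤ n ∧ n < k (m+1) ∧ (m ≠ n → m.natAbs < n.natAbs) := by
    intro n
    rcases le_or_gt 0 n with hn | hn
    · obtain ⟨m, h0, h1, h2, h3⟩ := hkup n.toNat
      have ht : ((n.toNat:ℕ):ℤ) = n := Int.toNat_of_nonneg hn
      rw [ht] at h1 h2 h3
      exact ⟨m, h2, h3, fun hne => by omega⟩
    · obtain ⟨m, h0, h1, h2, h3⟩ := hkdown (-n).toNat
      have ht : -(((-n).toNat:ℕ):ℤ) = n := by omega
      rw [ht] at h0 h2 h3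
      exact ⟨m, h2, h3, fun hne => by omega⟩
  -- the uniform bound
  set Lmax : ℕ := Finset.univ.sup fun a : A => (φ a).length with hLmax
  have hLm : ∀ a : A, (φ a).length ≤ Lmax := fun a => Finset.le_sup (f := fun a : A => (φ a).length) (Finset.mem_univ a)
  set B : ℝ := ((Lmax : ℝ) * W) / (1 - ‖μ‖) with hB
  have hμ1 : (0:ℝ) < 1 - ‖μ‖ := by linarith
  have hBnn : 0 ≤ B := div_nonneg (mul_nonneg (Nat.cast_nonneg _) hWnn) hμ1.le
  have hBkey : (Lmax:ℝ) * W = B * (1 - ‖μ‖) := by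
    rw [hB, div_mul_cancel₀]
    exact ne_of_gt hμ1
  have hfb : ∀ n : ℤ, ‖f n‖ ≤ B := by
    have main : ∀ N : ℕ, ∀ n : ℤ, n.natAbs ≤ N → ‖f n‖ ≤ B := by
      intro N
      induction N using Nat.strong_induction_on with
      | _ N IH =>
        intro n hn
        obtain ⟨m, h1, h2, h4⟩ := hloc n
        have hj : ∃ j : ℕ, n = k m + (j:ℤ) ∧ (j:ℝ) ≤ (Lmax:ℝ) := by
          refine ⟨(n - k m).toNat, by omega, ?_⟩
          have hlen := hkstep m
          have hl2 := hLm (u m)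
          have : (n - k m).toNat ≤ Lmax := by omega
          exact_mod_cast this
        obtain ⟨j, hj1, hj2⟩ := hj
        have hd : ‖f n - f (k m)‖ ≤ (Lmax:ℝ) * W := by
          rw [hj1]
          refine le_trans (hlip (k m) j) ?_
          exact mul_le_mul_of_nonneg_right hj2 hWnn
        have hest : ‖f n‖ ≤ (Lmax:ℝ)*W + ‖μ‖ * ‖f m‖ := by
          have he : f n = (f n - f (k m)) + μ * f m := by rw [← hf_k m]; ring
          rw [he]
          refine le_trans (norm_add_le _ _) ?_
          rw [norm_mul]
          exact add_le_add hd le_rfl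
        by_cases hc : m = n
        · rw [hc] at hest
          nlinarith [norm_nonneg (f n)]
        · have hlt := h4 hc
          have hfm : ‖f m‖ ≤ B := IH m.natAbs (lt_of_lt_of_le hlt hn) m le_rfl
          have : ‖μ‖ * ‖f m‖ ≤ ‖μ‖ * B := mul_le_mul_of_nonneg_left hfm (norm_nonneg μ)
          nlinarith [norm_nonneg (f n)]
    intro n
    exact main n.natAbs n le_rfl
  -- extract a real functional
  have ⟨a0, ha0⟩ : ∃ a, w a ≠ 0 := Function.ne_iff.1 hw0
  have hre : ∀ n : ℤ, (f n).re = ∑ a, (w a).re * ((sCount u a n : ℤ) : ℝ) := by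
    intro n
    simp only [hf]
    rw [Complex.re_sum]
    refine Finset.sum_congr rfl fun a _ => ?_
    simp [Complex.mul_re]
  have him : ∀ n : ℤ, (f n).im = ∑ a, (w a).im * ((sCount u a n : ℤ) : ℝ) := by
    intro n
    simp only [hf]
    rw [Complex.im_sum]
    refine Finset.sum_congr rfl fun a _ => ?_
    simp [Complex.mul_im]
  have hcases : (w a0).re ≠ 0 ∨ (w a0).im ≠ 0 := by
    by_contra h
    push_neg at h
    exact ha0 (Complex.ext h.1 h.2)
  rcases hcases with h | h
  · refine buildRep u (fun a => (w a).re) a0 h B fun n => ?_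
    rw [← hre n]
    exact le_trans (Complex.abs_re_le_norm (f n)) (hfb n)
  · refine buildRep u (fun a => (w a).im) a0 h B fun n => ?_
    rw [← him n]
    exact le_trans (Complex.abs_im_le_norm (f n)) (hfb n)
end
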